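/- Uniqueness of the population clustering solution at K = Q_fam (Section 3.1). Let β̂_1,…,β̂_J be sequences of ℝ^P-valued random vectors on a common probability space (for each n) with β̂_j →p β_j, and let S₀ be the partition of {1,…,J} into the Q_fam level sets of j ↦ β_j (the true group structure, where the distinct limit values are pairwise different). For a partition S = {S_1,…,S_K} of {1,…,J}, define the within-cluster sum of squares g_n(S) = Σ_{k=1}^{K} Σ_{j ∈ S_k} ‖β̂_j − S̄_k‖², where S̄_k is the arithmetic mean of the β̂_j with j ∈ S_k. Then: (i) g_n(S₀) →p 0; (ii) for every partition S into Q_fam cells with S ≠ S₀, g_n(S) converges in probability to a strictly positive constant; and consequently (iii) lim_{n→∞} P( g_n(S₀) < g_n(S) for every Q_fam-cell partition S ≠ S₀ ) = 1, so that asymptotically the true partition is the unique minimizer of the clustering objective among partitions into Q_fam cells. -/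

import Mathlib

open MeasureTheory Filter Finset

noncomputable section

/-- Squared Euclidean distance between two vectors of `ℝ^P`. -/
def sqDist {P : ℕ} (x y : Fin P → ℝ) : ℝ := ∑ i, (x i - y i) ^ 2

/-- Convergence in probability (in Euclidean distance) of `ℝ^P`-valued random vectors,
defined on a sequence of probability spaces, to a constant vector. -/
def TendstoInProb {Ω : ℕ → Type*} [∀ n, MeasurableSpace (Ω n)]
    (μ : ∀ n, Measure (Ω n)) {P : ℕ} (X : ∀ n, Ω n → Fin P → ℝ) (q : Fin P → ℝ) : Prop :=
  ∀ ε : ℝ, 0 < ε →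
    Tendsto (fun n => μ n {ω | ε < Real.sqrt (sqDist (X n ω) q)}) atTop (nhds 0)

/-- Convergence in probability of real-valued random variables to a constant. -/
def TendstoInProbR {Ω : ℕ → Type*} [∀ n, MeasurableSpace (Ω n)]
    (μ : ∀ n, Measure (Ω n)) (X : ∀ n, Ω n → ℝ) (c : ℝ) : Prop :=
  ∀ ε : ℝ, 0 < ε →
    Tendsto (fun n => μ n {ω | ε < |X n ω - c|}) atTop (nhds 0)

/-- The arithmetic mean of the points `x j`, `j ∈ A`. -/
def clMean {ι : Type*} {P : ℕ} (x : ι → Fin P → ℝ) (A : Finset ι) : Fin P → ℝ :=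
  (A.card : ℝ)⁻¹ • ∑ j ∈ A, x j

/-- A partition of `{1,…,J}`: a collection of nonempty sets such that every index belongs
to exactly one of them. -/
def IsPartition {J : ℕ} (𝒮 : Finset (Finset (Fin J))) : Prop :=
  (∀ A ∈ 𝒮, A.Nonempty) ∧ ∀ j : Fin J, ∃! A, A ∈ 𝒮 ∧ j ∈ A

/-- The within-cluster sum of squares `g(𝒮) = ∑_{cells A} ∑_{j ∈ A} ‖x j − mean_A‖²` of a
partition `𝒮`, evaluated at the points `x j ∈ ℝ^P`. -/
def withinSS {J P : ℕ} (𝒮 : Finset (Finset (Fin J))) (x : Fin J → Fin P → ℝ) : ℝ :=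
  ∑ A ∈ 𝒮, ∑ j ∈ A, sqDist (x j) (clMean x A)

lemma sqDist_nonneg {P : ℕ} (x y : Fin P → ℝ) : 0 ≤ sqDist x y :=
  Finset.sum_nonneg fun i _ => sq_nonneg _

lemma eq_of_sqDist_eq_zero {P : ℕ} {x y : Fin P → ℝ} (h : sqDist x y = 0) : x = y := by
  funext i
  have h2 := (Finset.sum_eq_zero_iff_of_nonneg (fun i _ => sq_nonneg (x i - y i))).mp h i
    (Finset.mem_univ i)
  have := pow_eq_zero_iff (n := 2) (by norm_num) |>.mp h2
  linarith

lemma withinSS_nonneg {J P : ℕ} (𝒮 : Finset (Finset (Fin J))) (x : Fin J → Fin P → ℝ) :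
    0 ≤ withinSS 𝒮 x :=
  Finset.sum_nonneg fun A _ => Finset.sum_nonneg fun j _ => sqDist_nonneg _ _

lemma continuous_withinSS {J P : ℕ} (𝒮 : Finset (Finset (Fin J))) :
    Continuous fun x : Fin J → Fin P → ℝ => withinSS 𝒮 x := by
  unfold withinSS sqDist clMean
  apply continuous_finset_sum; intro A _
  apply continuous_finset_sum; intro j _
  apply continuous_finset_sum; intro i _
  simp only [Pi.smul_apply, Finset.sum_apply, smul_eq_mul]
  fun_prop

lemma clMean_const {ι : Type*} {P : ℕ} (x : ι → Fin P → ℝ) (A : Finset ι) (v : Fin P → ℝ)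
    (hA : A.Nonempty) (h : ∀ j ∈ A, x j = v) : clMean x A = v := by
  unfold clMean
  rw [Finset.sum_congr rfl h, Finset.sum_const, ← Nat.cast_smul_eq_nsmul ℝ, smul_smul,
    inv_mul_cancel₀ (by exact_mod_cast Finset.card_ne_zero.mpr hA), one_smul]

/-- continuous mapping theorem for our ad-hoc convergence in probability -/
lemma tendstoInProbR_comp {Ω : ℕ → Type*} [∀ n, MeasurableSpace (Ω n)]
    (μ : ∀ n, Measure (Ω n)) {J P : ℕ}
    (βhat : ∀ n, Ω n → Fin J → Fin P → ℝ) (βlim : Fin J → Fin P → ℝ)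
    (hconv : ∀ j, ∀ ε : ℝ, 0 < ε →
      Tendsto (fun n => μ n {ω | ε < Real.sqrt (sqDist (βhat n ω j) (βlim j))}) atTop (nhds 0))
    (f : (Fin J → Fin P → ℝ) → ℝ) (hf : Continuous f) :
    ∀ ε : ℝ, 0 < ε →
      Tendsto (fun n => μ n {ω | ε < |f (βhat n ω) - f βlim|}) atTop (nhds 0) := by
  intro ε hε
  obtain ⟨δ, hδ, hball⟩ := Metric.continuousAt_iff.mp hf.continuousAt ε hε
  have hδ2 : 0 < δ / 2 := by linarith
  have hsub : ∀ n, {ω | ε < |f (βhat n ω) - f βlim|} ⊆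
      ⋃ j : Fin J, {ω | δ / 2 < Real.sqrt (sqDist (βhat n ω j) (βlim j))} := by
    intro n ω hω
    by_contra hc
    simp only [Set.mem_iUnion, Set.mem_setOf_eq, not_exists, not_lt] at hc
    have hdist : dist (βhat n ω) βlim < δ := by
      have : dist (βhat n ω) βlim ≤ δ / 2 := by
        rw [dist_pi_le_iff (le_of_lt hδ2)]
        intro j
        rw [dist_pi_le_iff (le_of_lt hδ2)]
        intro i
        have h1 : |βhat n ω j i - βlim j i| ≤ Real.sqrt (sqDist (βhat n ω j) (βlim j)) := by
          rw [← Real.sqrt_sq_eq_abs]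
          apply Real.sqrt_le_sqrt
          simp only [sqDist]
          exact Finset.single_le_sum (f := fun i => (βhat n ω j i - βlim j i) ^ 2)
            (fun i _ => sq_nonneg _) (Finset.mem_univ i)
        calc dist (βhat n ω j i) (βlim j i) = |βhat n ω j i - βlim j i| := Real.dist_eq _ _
          _ ≤ _ := h1
          _ ≤ δ / 2 := hc j
      linarith
    have := hball hdist
    rw [Real.dist_eq] at this
    exact absurd hω (by simp only [Set.mem_setOf_eq]; linarith)
  apply tendsto_of_tendsto_of_tendsto_of_le_of_le (g := fun _ => (0 : ENNReal))
    (h := fun n => ∑ j : Fin J, μ n {ω | δ / 2 < Real.sqrt (sqDist (βhat n ω j) (βlim j))})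
    tendsto_const_nhds
  · have : Tendsto (fun n => ∑ j : Fin J,
        μ n {ω | δ / 2 < Real.sqrt (sqDist (βhat n ω j) (βlim j))}) atTop
        (nhds (∑ _j : Fin J, (0 : ENNReal))) :=
      tendsto_finset_sum _ fun j _ => hconv j (δ / 2) hδ2
    simpa using this
  · intro n; exact zero_le
  · intro n
    calc μ n {ω | ε < |f (βhat n ω) - f βlim|}
        ≤ μ n (⋃ j : Fin J, {ω | δ / 2 < Real.sqrt (sqDist (βhat n ω j) (βlim j))}) :=
          measure_mono (hsub n)
      _ ≤ ∑' j : Fin J, μ n {ω | δ / 2 < Real.sqrt (sqDist (βhat n ω j) (βlim j))} :=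
          measure_iUnion_le _
      _ = ∑ j : Fin J, μ n {ω | δ / 2 < Real.sqrt (sqDist (βhat n ω j) (βlim j))} :=
          tsum_fintype _

lemma withinSS_S0_eq_zero {J P : ℕ} (βlim : Fin J → Fin P → ℝ) :
    withinSS (Finset.univ.image fun j => Finset.univ.filter fun k => βlim k = βlim j) βlim
      = 0 := by
  classical
  apply Finset.sum_eq_zero
  intro A hA
  obtain ⟨j, _, rfl⟩ := Finset.mem_image.mp hA
  have hmem : j ∈ Finset.univ.filter fun k => βlim k = βlim j := by simp
  have hmean : clMean βlim (Finset.univ.filter fun k => βlim k = βlim j) = βlim j :=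
    clMean_const _ _ _ ⟨j, hmem⟩ (fun k hk => (Finset.mem_filter.mp hk).2)
  apply Finset.sum_eq_zero
  intro k hk
  rw [hmean, (Finset.mem_filter.mp hk).2]
  simp [sqDist]

lemma withinSS_pos {J P : ℕ} (βlim : Fin J → Fin P → ℝ)
    (𝒮 : Finset (Finset (Fin J))) (hp : IsPartition 𝒮)
    (hcard : 𝒮.card = (Finset.univ.image βlim).card)
    (hne : 𝒮 ≠ Finset.univ.image fun j => Finset.univ.filter fun k => βlim k = βlim j) :
    0 < withinSS 𝒮 βlim := by
  classical
  rcases (withinSS_nonneg 𝒮 βlim).lt_or_eq with h | h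
  · exact h
  exfalso
  -- from withinSS = 0, each point equals its cell mean
  have hz : ∀ A ∈ 𝒮, ∀ j ∈ A, βlim j = clMean βlim A := by
    intro A hA j hj
    have h1 := (Finset.sum_eq_zero_iff_of_nonneg
      (fun A _ => Finset.sum_nonneg fun j _ => sqDist_nonneg (βlim j) (clMean βlim A))).mp
      h.symm A hA
    have h2 := (Finset.sum_eq_zero_iff_of_nonneg
      (fun j _ => sqDist_nonneg (βlim j) (clMean βlim A))).mp h1 j hj
    exact eq_of_sqDist_eq_zero h2
  have hconst : ∀ A ∈ 𝒮, ∀ j ∈ A, ∀ k ∈ A, βlim j = βlim k := by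
    intro A hA j hj k hk
    rw [hz A hA j hj, hz A hA k hk]
  -- cell-of function
  have hex : ∀ j : Fin J, ∃ A, (A ∈ 𝒮 ∧ j ∈ A) ∧ ∀ B, B ∈ 𝒮 → j ∈ B → B = A := by
    intro j
    obtain ⟨A, hA, hu⟩ := hp.2 j
    exact ⟨A, hA, fun B h1 h2 => hu B ⟨h1, h2⟩⟩
  choose F hF1 hF2 using hex
  have hFmem : ∀ j, F j ∈ 𝒮 := fun j => (hF1 j).1
  have hFself : ∀ j, j ∈ F j := fun j => (hF1 j).2
  -- value function
  set V : Finset (Fin J) → (Fin P → ℝ) :=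
    fun A => if h : A.Nonempty then βlim h.choose else 0 with hVdef
  have hV : ∀ A ∈ 𝒮, ∀ j ∈ A, V A = βlim j := by
    intro A hA j hj
    have hne' : A.Nonempty := ⟨j, hj⟩
    simp only [hVdef, dif_pos hne']
    exact (hconst A hA _ hne'.choose_spec j hj)
  have himg : 𝒮.image V = Finset.univ.image βlim := by
    ext v
    simp only [Finset.mem_image, Finset.mem_univ, true_and]
    constructor
    · rintro ⟨A, hA, rfl⟩
      obtain ⟨j, hj⟩ := hp.1 A hA
      exact ⟨j, (hV A hA j hj).symm⟩
    · rintro ⟨j, rfl⟩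
      exact ⟨F j, hFmem j, hV _ (hFmem j) j (hFself j)⟩
  have hinj : Set.InjOn V ↑𝒮 := by
    apply Finset.card_image_iff.mp
    rw [himg, ← hcard]
  -- equal values force equal cells
  have hsame : ∀ j k : Fin J, βlim k = βlim j → F k = F j := by
    intro j k hjk
    apply hinj (hFmem k) (hFmem j)
    rw [hV _ (hFmem k) k (hFself k), hV _ (hFmem j) j (hFself j), hjk]
  have hcell : ∀ j : Fin J, F j = Finset.univ.filter fun k => βlim k = βlim j := by
    intro j
    ext k
    simp only [Finset.mem_filter, Finset.mem_univ, true_and]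
    constructor
    · intro hk
      exact (hconst _ (hFmem j) j (hFself j) k hk).symm
    · intro hk
      rw [← hsame j k hk]
      exact hFself k
  apply hne
  ext A
  simp only [Finset.mem_image, Finset.mem_univ, true_and]
  constructor
  · intro hA
    obtain ⟨j, hj⟩ := hp.1 A hA
    exact ⟨j, by rw [← hcell j, hF2 j A hA hj]⟩
  · rintro ⟨j, rfl⟩
    rw [← hcell j]
    exact hFmem j


/-- **Uniqueness of the population clustering solution at `K = Q_fam`** (Section 3.1).
Let `β̂ⱼ →p βⱼ` and let `S₀` be the partition of `{1,…,J}` into the `Q_fam` level sets of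
`j ↦ βⱼ`.  Then (i) the within-cluster sum of squares of `S₀` converges in probability to
`0`; (ii) for every other partition `S ≠ S₀` into `Q_fam` cells, it converges in
probability to a strictly positive constant; and consequently (iii) with probability
tending to one, `S₀` is the unique minimizer of the clustering objective among partitions
into `Q_fam` cells. -/
theorem population_clustering_unique_minimizer
    {Ω : ℕ → Type*} [∀ n, MeasurableSpace (Ω n)]
    (μ : ∀ n, Measure (Ω n)) [∀ n, IsProbabilityMeasure (μ n)]
    {J P : ℕ}
    (βhat : ∀ n, Ω n → Fin J → Fin P → ℝ) (βlim : Fin J → Fin P → ℝ)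
    (hconv : ∀ j, TendstoInProb μ (fun n ω => βhat n ω j) (βlim j))
    (S₀ : Finset (Finset (Fin J)))
    (hS₀ : S₀ = Finset.univ.image fun j => Finset.univ.filter fun k => βlim k = βlim j)
    (Qfam : ℕ) (hQfam : Qfam = (Finset.univ.image βlim).card) :
    TendstoInProbR μ (fun n ω => withinSS S₀ (βhat n ω)) 0 ∧
    (∀ 𝒮 : Finset (Finset (Fin J)), IsPartition 𝒮 → 𝒮.card = Qfam → 𝒮 ≠ S₀ →
      ∃ c : ℝ, 0 < c ∧
        TendstoInProbR μ (fun n ω => withinSS 𝒮 (βhat n ω)) c) ∧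
    Tendsto
      (fun n => μ n {ω | ∀ 𝒮 : Finset (Finset (Fin J)),
        IsPartition 𝒮 → 𝒮.card = Qfam → 𝒮 ≠ S₀ →
          withinSS S₀ (βhat n ω) < withinSS 𝒮 (βhat n ω)})
      atTop (nhds 1) := by
  classical
  subst hS₀ hQfam
  set S₀ : Finset (Finset (Fin J)) :=
    Finset.univ.image fun j => Finset.univ.filter fun k => βlim k = βlim j with hS₀
  set Qfam : ℕ := (Finset.univ.image βlim).card with hQfam
  -- part (i)
  have hi : ∀ ε : ℝ, 0 < ε →
      Tendsto (fun n => μ n {ω | ε < |withinSS S₀ (βhat n ω) - 0|}) atTop (nhds 0) := by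
    have h := tendstoInProbR_comp μ βhat βlim hconv (withinSS S₀) (continuous_withinSS S₀)
    rw [hS₀, withinSS_S0_eq_zero] at h
    exact h
  -- part (ii)
  have hii : ∀ 𝒮 : Finset (Finset (Fin J)), IsPartition 𝒮 → 𝒮.card = Qfam → 𝒮 ≠ S₀ →
      0 < withinSS 𝒮 βlim ∧
      ∀ ε : ℝ, 0 < ε →
        Tendsto (fun n => μ n {ω | ε < |withinSS 𝒮 (βhat n ω) - withinSS 𝒮 βlim|})
          atTop (nhds 0) := by
    intro 𝒮 hp hc hne
    exact ⟨withinSS_pos βlim 𝒮 hp hc hne,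
      tendstoInProbR_comp μ βhat βlim hconv (withinSS 𝒮) (continuous_withinSS 𝒮)⟩
  refine ⟨hi, fun 𝒮 hp hc hne => ⟨withinSS 𝒮 βlim, (hii 𝒮 hp hc hne).1, (hii 𝒮 hp hc hne).2⟩, ?_⟩
  -- part (iii)
  set bad : Finset (Finset (Finset (Fin J))) :=
    Finset.univ.filter (fun 𝒮 => IsPartition 𝒮 ∧ 𝒮.card = Qfam ∧ 𝒮 ≠ S₀) with hbad
  set E : ∀ n, Set (Ω n) := fun n => {ω | ∀ 𝒮 : Finset (Finset (Fin J)),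
    IsPartition 𝒮 → 𝒮.card = Qfam → 𝒮 ≠ S₀ →
      withinSS S₀ (βhat n ω) < withinSS 𝒮 (βhat n ω)} with hE
  set B : ∀ n, Finset (Finset (Fin J)) → Set (Ω n) := fun n 𝒮 =>
    {ω | withinSS 𝒮 βlim / 3 < |withinSS S₀ (βhat n ω) - 0|} ∪
    {ω | withinSS 𝒮 βlim / 3 < |withinSS 𝒮 (βhat n ω) - withinSS 𝒮 βlim|} with hB
  have hsub : ∀ n, (E n)ᶜ ⊆ ⋃ 𝒮 ∈ bad, B n 𝒮 := by
    intro n ω hω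
    simp only [hE, Set.mem_compl_iff, Set.mem_setOf_eq, not_forall, not_lt] at hω
    obtain ⟨𝒮, hp, hc, hne, hge⟩ := hω
    have hmem : 𝒮 ∈ bad := by simp [hbad, hp, hc, hne]
    refine Set.mem_biUnion hmem ?_
    by_contra hnot
    simp only [hB, Set.mem_union, Set.mem_setOf_eq, not_or, not_lt] at hnot
    obtain ⟨h1, h2⟩ := hnot
    have hcpos := (hii 𝒮 hp hc hne).1
    rw [sub_zero] at h1
    have hb1 : withinSS S₀ (βhat n ω) ≤ withinSS 𝒮 βlim / 3 := le_trans (le_abs_self _) h1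
    have hb2 := abs_le.mp h2
    linarith [hb2.1]
  have hcompl : Tendsto (fun n => μ n (E n)ᶜ) atTop (nhds 0) := by
    apply tendsto_of_tendsto_of_tendsto_of_le_of_le (g := fun _ => (0 : ENNReal))
      (h := fun n => ∑ 𝒮 ∈ bad, μ n (B n 𝒮)) tendsto_const_nhds
    · have : Tendsto (fun n => ∑ 𝒮 ∈ bad, μ n (B n 𝒮)) atTop
          (nhds (∑ _𝒮 ∈ bad, (0 : ENNReal))) := by
        apply tendsto_finset_sum
        intro 𝒮 h𝒮
        simp only [hbad, Finset.mem_filter] at h𝒮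
        obtain ⟨_, hp, hc, hne⟩ := h𝒮
        have hcpos := (hii 𝒮 hp hc hne).1
        have h3 : (0:ℝ) < withinSS 𝒮 βlim / 3 := by linarith
        have t1 := hi _ h3
        have t2 := (hii 𝒮 hp hc hne).2 _ h3
        apply tendsto_of_tendsto_of_tendsto_of_le_of_le (g := fun _ => (0 : ENNReal))
          (h := fun n => μ n {ω | withinSS 𝒮 βlim / 3 < |withinSS S₀ (βhat n ω) - 0|} +
            μ n {ω | withinSS 𝒮 βlim / 3 < |withinSS 𝒮 (βhat n ω) - withinSS 𝒮 βlim|})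
          tendsto_const_nhds
        · simpa using t1.add t2
        · intro n; exact zero_le
        · intro n; exact measure_union_le _ _
      simpa using this
    · intro n; exact zero_le
    · intro n
      exact le_trans (measure_mono (hsub n)) (measure_biUnion_finset_le bad _)
  have hup : ∀ n, μ n (E n) ≤ 1 := fun n => prob_le_one
  have hlow : ∀ n, 1 - μ n (E n)ᶜ ≤ μ n (E n) := by
    intro n
    rw [tsub_le_iff_right]
    calc (1 : ENNReal) = μ n Set.univ := (measure_univ).symm
      _ = μ n (E n ∪ (E n)ᶜ) := by rw [Set.union_compl_self]
      _ ≤ μ n (E n) + μ n (E n)ᶜ := measure_union_le _ _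
  have hlowt : Tendsto (fun n => 1 - μ n (E n)ᶜ) atTop (nhds 1) := by
    have := ENNReal.Tendsto.sub (tendsto_const_nhds (x := (1:ENNReal))) hcompl
      (Or.inr (by simp))
    simpa using this
  exact tendsto_of_tendsto_of_tendsto_of_le_of_le hlowt tendsto_const_nhds hlow hup
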